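/- arXiv:1003.2442 — 5 statements merged into one kernel-verified Lean document; each statement's English description precedes it below -/
import Mathlib

section
/- The first and second derivatives of the function U₀(z) = 1/(1 + exp(z/√2)) satisfy |U₀'(z)| + |U₀''(z)| ≤ 2·exp(−|z|/√2) for every z ∈ ℝ. (This is the second part of Lemma 5.4, with explicit constants C = 2 and λ = 1/√2.) -/
/-- The standing-wave profile `U₀(z) = 1/(1 + exp(z/√2))`. -/
noncomputable def U₀ (z : ℝ) : ℝ := 1 / (1 + Real.exp (z / Real.sqrt 2))

open Real

lemma hE (z : ℝ) : HasDerivAt (fun z : ℝ => exp (z / sqrt 2))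
    (exp (z / sqrt 2) * (1 / sqrt 2)) z := by
  simpa using ((hasDerivAt_id z).div_const (sqrt 2)).exp

lemma onePlusPos (z : ℝ) : (0:ℝ) < 1 + exp (z / sqrt 2) := by positivity

lemma hU1 (z : ℝ) : HasDerivAt U₀
    (-(exp (z / sqrt 2) * (1 / sqrt 2)) / (1 + exp (z / sqrt 2))^2) z := by
  have h := ((hE z).const_add 1).inv (ne_of_gt (onePlusPos z))
  have hU' : U₀ = fun z : ℝ => (1 + exp (z / sqrt 2))⁻¹ := by
    funext z; simp [U₀]
  rw [hU']
  exact h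

lemma derivU₀ : deriv U₀ = fun z =>
    -(exp (z / sqrt 2) * (1 / sqrt 2)) / (1 + exp (z / sqrt 2))^2 :=
  funext fun z => (hU1 z).deriv

lemma hU2 (z : ℝ) : HasDerivAt (deriv U₀)
    (-((1 / sqrt 2)^2 * exp (z / sqrt 2) * (1 - exp (z / sqrt 2))) / (1 + exp (z / sqrt 2))^3) z := by
  rw [derivU₀]
  have h1 : HasDerivAt (fun z : ℝ => -(exp (z / sqrt 2) * (1 / sqrt 2)))
      (-(exp (z / sqrt 2) * (1 / sqrt 2) * (1 / sqrt 2))) z := ((hE z).mul_const _).neg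
  have h2 : HasDerivAt (fun z : ℝ => ((1 + exp (z / sqrt 2))^2)⁻¹)
      (-((2 : ℕ) * (1 + exp (z / sqrt 2))^1 * (exp (z / sqrt 2) * (1 / sqrt 2))) /
        ((1 + exp (z / sqrt 2))^2)^2) z :=
    (((hE z).const_add 1).pow 2).inv (pow_ne_zero _ (ne_of_gt (onePlusPos z)))
  have h : HasDerivAt (fun z : ℝ => -(exp (z / sqrt 2) * (1 / sqrt 2)) * ((1 + exp (z / sqrt 2))^2)⁻¹)
      (-(exp (z / sqrt 2) * (1 / sqrt 2) * (1 / sqrt 2)) * ((1 + exp (z / sqrt 2))^2)⁻¹ +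
        -(exp (z / sqrt 2) * (1 / sqrt 2)) *
          (-((2 : ℕ) * (1 + exp (z / sqrt 2))^1 * (exp (z / sqrt 2) * (1 / sqrt 2))) /
            ((1 + exp (z / sqrt 2))^2)^2)) z := h1.mul h2
  have hfun : (fun z : ℝ => -(exp (z / sqrt 2) * (1 / sqrt 2)) / (1 + exp (z / sqrt 2))^2)
      = fun z : ℝ => -(exp (z / sqrt 2) * (1 / sqrt 2)) * ((1 + exp (z / sqrt 2))^2)⁻¹ := by
    funext z; rw [div_eq_mul_inv]
  rw [hfun]
  convert h using 1
  have hne : (1 + exp (z / sqrt 2)) ≠ 0 := ne_of_gt (onePlusPos z)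
  have hsq : (Real.sqrt 2)^2 = 2 := Real.sq_sqrt (by norm_num)
  field_simp
  ring_nf

theorem stmt_4 :
    ∀ z : ℝ, |deriv U₀ z| + |deriv (deriv U₀) z| ≤ 2 * Real.exp (-|z| / Real.sqrt 2) := by
  intro z
  set e := exp (z / sqrt 2) with he
  have hepos : 0 < e := exp_pos _
  have h1pos : 0 < 1 + e := by linarith
  have hs2 : (1:ℝ) ≤ sqrt 2 := by
    nlinarith [Real.sq_sqrt (by norm_num : (2:ℝ) ≥ 0), Real.sqrt_nonneg 2]
  have hcpos : (0:ℝ) < 1 / sqrt 2 := by positivity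
  have hcle : (1 : ℝ) / sqrt 2 ≤ 1 := by
    rw [div_le_one (by linarith)]; linarith
  have hm : e / (1 + e)^2 ≤ exp (-|z| / sqrt 2) := by
    rcases le_total 0 z with hz | hz
    · have hval : exp (-|z| / sqrt 2) = e⁻¹ := by
        rw [abs_of_nonneg hz, he, ← exp_neg]
        ring_nf
      rw [hval, div_le_iff₀ (by positivity), inv_eq_one_div]
      rw [div_mul_eq_mul_div, le_div_iff₀ hepos]
      nlinarith
    · have hval : exp (-|z| / sqrt 2) = e := by
        rw [abs_of_nonpos hz, he]
        ring_nf
      rw [hval, div_le_iff₀ (by positivity)]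
      nlinarith [mul_pos hepos hepos, mul_pos (mul_pos hepos hepos) hepos]
  have hd1 : deriv U₀ z = -(e * (1 / sqrt 2)) / (1 + e)^2 := (hU1 z).deriv
  have hd2 : deriv (deriv U₀) z = -((1 / sqrt 2)^2 * e * (1 - e)) / (1 + e)^3 := (hU2 z).deriv
  rw [hd1, hd2, abs_div, abs_div]
  have e1 : |-(e * (1 / sqrt 2))| = e * (1 / sqrt 2) := by
    rw [abs_neg, abs_of_pos (by positivity)]
  have e2 : |(1 + e)^2| = (1 + e)^2 := abs_of_pos (by positivity)
  have e3 : |-((1 / sqrt 2)^2 * e * (1 - e))| = (1 / sqrt 2)^2 * e * |1 - e| := by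
    rw [abs_neg, abs_mul, abs_mul, abs_of_pos (by positivity), abs_of_pos hepos]
  have e4 : |(1 + e)^3| = (1 + e)^3 := abs_of_pos (by positivity)
  rw [e1, e2, e3, e4]
  have habs : |1 - e| ≤ 1 + e := by
    rw [abs_le]; constructor <;> nlinarith
  have key1 : e * (1 / sqrt 2) / (1 + e)^2 = (1 / sqrt 2) * (e / (1 + e)^2) := by
    ring
  have key2 : (1 / sqrt 2)^2 * e * |1 - e| / (1 + e)^3 ≤ (1 / sqrt 2)^2 * (e / (1 + e)^2) := by
    rw [div_le_iff₀ (by positivity)]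
    have : (1 / sqrt 2)^2 * (e / (1 + e)^2) * (1 + e)^3 = (1 / sqrt 2)^2 * e * (1 + e) := by
      field_simp
    rw [this]
    exact mul_le_mul_of_nonneg_left habs (by positivity)
  have hmpos : 0 < exp (-|z| / sqrt 2) := exp_pos _
  have hc2 : (1 / sqrt 2)^2 ≤ 1 := by nlinarith
  have hfrac : 0 ≤ e / (1 + e)^2 := by positivity
  nlinarith [mul_le_mul_of_nonneg_left hm (le_of_lt hcpos),
    mul_le_mul_of_nonneg_left hm (sq_nonneg (1 / sqrt 2))]
end

section
/- Uniqueness of the standing wave: if V : ℝ → ℝ is twice differentiable with V''(z) + f(V(z)) = 0 for all z ∈ ℝ, V(0) = 1/2, V(z) → 1 as z → −∞ and V(z) → 0 as z → +∞, then V(z) = 1/(1 + exp(z/√2)) for every z ∈ ℝ. -/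
/-- The balanced bistable nonlinearity `f(u) = u(1-u)(u-1/2)`. -/
noncomputable def f (u : ℝ) : ℝ := u * (1 - u) * (u - 1 / 2)

open Filter Set

noncomputable def F (u : ℝ) : ℝ := -(u^2 * (u-1)^2) / 4

lemma hasDerivAt_F (u : ℝ) : HasDerivAt F (f u) u := by
  have h1 : HasDerivAt (fun u : ℝ => u^2) (2 * u ^ 1 * 1) u := (hasDerivAt_id u).pow 2
  have h2 : HasDerivAt (fun u : ℝ => (u-1)^2) (2 * (u-1) ^ 1 * 1) u :=
    ((hasDerivAt_id u).sub_const 1).pow 2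
  have h := ((h1.mul h2).neg).div_const 4
  refine h.congr_deriv (Eq.symm ?_)
  unfold f; ring



lemma gron_fwd {g : ℝ → ℝ} {L a b : ℝ} (hab : a ≤ b) (hg : Differentiable ℝ g)
    (hnn : ∀ z, 0 ≤ g z) (hb : ∀ z ∈ Set.Icc a b, deriv g z ≤ L * g z)
    (ha : g a = 0) : g b = 0 := by
  set ψ : ℝ → ℝ := fun z => g z * Real.exp (-L * z) with hψ
  have hder : ∀ z, HasDerivAt ψ ((deriv g z - L * g z) * Real.exp (-L * z)) z := by
    intro z
    have h1 : HasDerivAt (fun z : ℝ => Real.exp (-L * z)) (Real.exp (-L * z) * (-L)) z := by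
      simpa using (((hasDerivAt_id z).const_mul (-L)).exp)
    have := ((hg z).hasDerivAt).mul h1
    refine this.congr_deriv (Eq.symm ?_)
    ring
  have hmono : AntitoneOn ψ (Set.Icc a b) := by
    apply antitoneOn_of_deriv_nonpos (convex_Icc a b)
    · exact (Continuous.mul hg.continuous (by continuity)).continuousOn
    · intro z hz
      exact ((hder z).differentiableAt).differentiableWithinAt
    · intro z hz
      rw [(hder z).deriv]
      have hz' : z ∈ Set.Icc a b := interior_subset hz
      have := hb z hz'
      have he := Real.exp_pos (-L * z)
      nlinarith
  have h1 : ψ b ≤ ψ a := hmono (Set.left_mem_Icc.mpr hab) (Set.right_mem_Icc.mpr hab) hab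
  have h2 : ψ a = 0 := by simp [hψ, ha]
  have h3 : 0 ≤ ψ b := mul_nonneg (hnn b) (Real.exp_pos _).le
  have h4 : ψ b = 0 := le_antisymm (h2 ▸ h1) h3
  have := Real.exp_pos (-L * b)
  have : g b * Real.exp (-L * b) = 0 := h4
  rcases mul_eq_zero.mp this with h | h
  · exact h
  · exact absurd h (Real.exp_pos _).ne'

lemma gron_bwd {g : ℝ → ℝ} {L a b : ℝ} (hab : a ≤ b) (hg : Differentiable ℝ g)
    (hnn : ∀ z, 0 ≤ g z) (hb : ∀ z ∈ Set.Icc a b, -(L * g z) ≤ deriv g z)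
    (hb0 : g b = 0) : g a = 0 := by
  set ψ : ℝ → ℝ := fun z => g z * Real.exp (L * z) with hψ
  have hder : ∀ z, HasDerivAt ψ ((deriv g z + L * g z) * Real.exp (L * z)) z := by
    intro z
    have h1 : HasDerivAt (fun z : ℝ => Real.exp (L * z)) (Real.exp (L * z) * L) z := by
      simpa using (((hasDerivAt_id z).const_mul L).exp)
    have := ((hg z).hasDerivAt).mul h1
    refine this.congr_deriv (Eq.symm ?_)
    ring
  have hmono : MonotoneOn ψ (Set.Icc a b) := by
    apply monotoneOn_of_deriv_nonneg (convex_Icc a b)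
    · exact (Continuous.mul hg.continuous (by continuity)).continuousOn
    · intro z hz
      exact ((hder z).differentiableAt).differentiableWithinAt
    · intro z hz
      rw [(hder z).deriv]
      have hz' : z ∈ Set.Icc a b := interior_subset hz
      have := hb z hz'
      have he := Real.exp_pos (L * z)
      nlinarith
  have h1 : ψ a ≤ ψ b := hmono (Set.left_mem_Icc.mpr hab) (Set.right_mem_Icc.mpr hab) hab
  have h2 : ψ b = 0 := by simp [hψ, hb0]
  have h3 : 0 ≤ ψ a := mul_nonneg (hnn a) (Real.exp_pos _).le
  have h4 : ψ a = 0 := le_antisymm (h2 ▸ h1) h3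
  have : g a * Real.exp (L * a) = 0 := h4
  rcases mul_eq_zero.mp this with h | h
  · exact h
  · exact absurd h (Real.exp_pos _).ne'

lemma no_touch (g Q : ℝ → ℝ) (hgd : Differentiable ℝ g) (hQ : Continuous Q)
    (hnn : ∀ y, 0 ≤ g y) (hbd : ∀ y, |deriv g y| ≤ |Q y| * g y)
    (z₁ : ℝ) (hg1 : g z₁ = 0) : g 0 = 0 := by
  obtain ⟨K, hK⟩ := (isCompact_uIcc (a := z₁) (b := 0)).exists_bound_of_continuousOn
    hQ.continuousOn
  have hbd' : ∀ y ∈ Set.uIcc z₁ 0, |deriv g y| ≤ K * g y := by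
    intro y hy
    refine (hbd y).trans (mul_le_mul_of_nonneg_right ?_ (hnn y))
    simpa [Real.norm_eq_abs] using hK y hy
  rcases le_total z₁ 0 with h | h
  · refine gron_fwd (L := K) h hgd hnn (fun z hz => ?_) hg1
    have := hbd' z (by rwa [Set.uIcc_of_le h])
    exact (abs_le.mp this).2
  · refine gron_bwd (L := K) h hgd hnn (fun z hz => ?_) hg1
    have := hbd' z (by rwa [Set.uIcc_of_ge h])
    exact neg_le.mp (neg_le.mp (by linarith [(abs_le.mp this).1]))

lemma touch_contra (V : ℝ → ℝ) (hV : Differentiable ℝ V) (hV' : Differentiable ℝ (deriv V))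
    (hV'' : ∀ z, deriv (deriv V) z = -f (V z)) (a : ℝ) (r : ℝ → ℝ) (hr : Continuous r)
    (hfr : ∀ v, f v = (v - a) * r v) (z₁ : ℝ) (h1 : V z₁ = a) (h2 : deriv V z₁ = 0) :
    V 0 = a := by
  set g : ℝ → ℝ := fun y => (V y - a)^2 + (deriv V y)^2 with hgdef
  have hg : ∀ y, HasDerivAt g
      (2 * (V y - a) * deriv V y * (1 - r (V y))) y := by
    intro y
    have hd1 : HasDerivAt (fun x => (V x - a)^2) (2 * (V y - a)^1 * deriv V y) y :=
      ((hV y).hasDerivAt.sub_const a).pow 2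
    have hd2 : HasDerivAt (fun x => (deriv V x)^2) (2 * (deriv V y)^1 * deriv (deriv V) y) y :=
      ((hV' y).hasDerivAt).pow 2
    have := hd1.add hd2
    refine this.congr_deriv (Eq.symm ?_)
    rw [hV'' y, hfr (V y)]
    ring
  have hderiv : ∀ y, deriv g y = 2 * (V y - a) * deriv V y * (1 - r (V y)) :=
    fun y => (hg y).deriv
  have h0 : g 0 = 0 := by
    apply no_touch g (fun y => 1 - r (V y)) (fun y => (hg y).differentiableAt)
      (continuous_const.sub (hr.comp hV.continuous))
      (fun y => by positivity) _ z₁ (by simp [hgdef, h1, h2])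
    intro y
    rw [hderiv y]
    have h2ab : |2 * (V y - a) * deriv V y| ≤ (V y - a)^2 + (deriv V y)^2 := by
      rw [abs_le]; constructor <;> nlinarith [sq_nonneg (V y - a + deriv V y), sq_nonneg (V y - a - deriv V y)]
    calc |2 * (V y - a) * deriv V y * (1 - r (V y))|
        = |2 * (V y - a) * deriv V y| * |1 - r (V y)| := abs_mul _ _
      _ ≤ ((V y - a)^2 + (deriv V y)^2) * |1 - r (V y)| :=
          mul_le_mul_of_nonneg_right h2ab (abs_nonneg _)
      _ = |1 - r (V y)| * g y := by rw [hgdef]; ring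
  have : (V 0 - a)^2 = 0 := by
    have h1' : 0 ≤ (V 0 - a)^2 := sq_nonneg _
    have h2' : 0 ≤ (deriv V 0)^2 := sq_nonneg _
    simp only [hgdef] at h0
    nlinarith
  have := sq_eq_zero_iff.mp this
  linarith

lemma final_part (V : ℝ → ℝ) (hV : Differentiable ℝ V) (hV' : Differentiable ℝ (deriv V))
    (hV'' : ∀ z, deriv (deriv V) z = -f (V z)) (h0 : V 0 = 1/2)
    (htop : Tendsto V atTop (nhds 0))
    (key : ∀ z, (deriv V z)^2 = (V z)^2 * (V z - 1)^2 / 2) : ∀ z, V z = U₀ z := by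
  have hrange : ∀ z, 0 < V z ∧ V z < 1 := by
    by_contra hcon
    push_neg at hcon
    obtain ⟨z, hz⟩ := hcon
    have hz1 : V z ≤ 0 ∨ 1 ≤ V z := by
      rcases le_or_gt (V z) 0 with h | h
      · exact Or.inl h
      · exact Or.inr (hz h)
    have hVa : V 0 = 0 ∨ V 0 = 1 := by
      rcases hz1 with h | h
      · left
        have hmem : (0:ℝ) ∈ Set.uIcc (V z) (V 0) := by
          rw [Set.mem_uIcc]; left
          refine ⟨h, by rw [h0]; norm_num⟩
        obtain ⟨z₁, _, hz₁⟩ := intermediate_value_uIcc (hV.continuous.continuousOn) hmem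
        have hd : deriv V z₁ = 0 := by
          have hk := key z₁; rw [hz₁] at hk
          have : (deriv V z₁)^2 = 0 := by rw [hk]; ring
          exact pow_eq_zero_iff (by norm_num) |>.mp this
        exact touch_contra V hV hV' hV'' 0 (fun v => (1-v)*(v-1/2))
          (by continuity) (fun v => by unfold f; ring) z₁ (by simpa using hz₁) hd
      · right
        have hmem : (1:ℝ) ∈ Set.uIcc (V z) (V 0) := by
          rw [Set.mem_uIcc]; right
          refine ⟨by rw [h0]; norm_num, h⟩
        obtain ⟨z₁, _, hz₁⟩ := intermediate_value_uIcc (hV.continuous.continuousOn) hmem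
        have hd : deriv V z₁ = 0 := by
          have hk := key z₁; rw [hz₁] at hk
          have : (deriv V z₁)^2 = 0 := by rw [hk]; ring
          exact pow_eq_zero_iff (by norm_num) |>.mp this
        exact touch_contra V hV hV' hV'' 1 (fun v => -(v*(v-1/2)))
          (by continuity) (fun v => by unfold f; ring) z₁ hz₁ hd
    rcases hVa with h | h <;> rw [h0] at h <;> norm_num at h
  have hne : ∀ z, deriv V z ≠ 0 := by
    intro z hzero
    have hk := key z
    rw [hzero] at hk
    have h1 := (hrange z).1; have h2 := (hrange z).2
    have h3 : V z * (V z - 1) ≠ 0 := mul_ne_zero h1.ne' (by linarith)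
    have h4 : 0 < (V z * (V z - 1))^2 := lt_of_le_of_ne (sq_nonneg _) (pow_ne_zero 2 h3).symm
    nlinarith
  have hexneg : ∃ c, deriv V c < 0 := by
    have hev : ∀ᶠ z in atTop, V z < 1/4 := htop.eventually (eventually_lt_nhds (by norm_num))
    obtain ⟨z₀, hz₀1, hz₀2⟩ := ((eventually_ge_atTop (1:ℝ)).and hev).exists
    have h01 : (0:ℝ) < z₀ := by linarith
    obtain ⟨c, hc, hceq⟩ := exists_hasDerivAt_eq_slope V (deriv V) h01
      (hV.continuous.continuousOn) (fun x _ => (hV x).hasDerivAt)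
    refine ⟨c, ?_⟩
    rw [hceq, h0]
    apply div_neg_of_neg_of_pos <;> linarith
  obtain ⟨c, hc⟩ := hexneg
  have hneg : ∀ z, deriv V z < 0 := by
    intro z
    rcases lt_or_gt_of_ne (hne z) with h | h
    · exact h
    · exfalso
      have hmem : (0:ℝ) ∈ Set.uIcc (deriv V z) (deriv V c) := by
        rw [Set.mem_uIcc]; right; constructor <;> linarith
      obtain ⟨c', _, hc0⟩ := intermediate_value_uIcc
        (hV'.continuous.continuousOn (s := Set.uIcc z c)) hmem
      exact hne c' hc0
  have hs2 : (0:ℝ) < Real.sqrt 2 := Real.sqrt_pos.mpr (by norm_num)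
  have hform : ∀ z, deriv V z = -(V z * (1 - V z)) / Real.sqrt 2 := by
    intro z
    have h1 := (hrange z).1; have h2 := (hrange z).2
    have hb : 0 < V z * (1 - V z) := by nlinarith
    have hbneg : -(V z * (1 - V z)) / Real.sqrt 2 < 0 :=
      div_neg_of_neg_of_pos (by linarith) hs2
    have hsq : (deriv V z)^2 = (-(V z * (1 - V z)) / Real.sqrt 2)^2 := by
      rw [div_pow, neg_pow, Real.sq_sqrt (by norm_num : (0:ℝ) ≤ 2)]
      rw [key z]; ring
    have habs : |deriv V z| = |-(V z * (1 - V z)) / Real.sqrt 2| := by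
      rw [← Real.sqrt_sq_eq_abs, ← Real.sqrt_sq_eq_abs, hsq]
    rw [abs_of_neg (hneg z), abs_of_neg hbneg] at habs
    linarith
  intro z
  have hφ : ∀ y, HasDerivAt
      (fun x => Real.log (V x) - Real.log (1 - V x) + x / Real.sqrt 2) 0 y := by
    intro y
    have h1 := (hrange y).1
    have h2 : 0 < 1 - V y := by linarith [(hrange y).2]
    have hd : HasDerivAt V (deriv V y) y := (hV y).hasDerivAt
    have hl1 : HasDerivAt (fun x => Real.log (V x)) (deriv V y / V y) y := hd.log h1.ne'
    have hl2 : HasDerivAt (fun x => Real.log (1 - V x)) (-deriv V y / (1 - V y)) y :=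
      (hd.const_sub 1).log h2.ne'
    have hl3 : HasDerivAt (fun x : ℝ => x / Real.sqrt 2) (1 / Real.sqrt 2) y := by
      simpa using (hasDerivAt_id y).div_const (Real.sqrt 2)
    have := (hl1.sub hl2).add hl3
    refine this.congr_deriv (Eq.symm ?_)
    rw [hform y]
    field_simp
    ring
  have hconst := is_const_of_deriv_eq_zero (fun y => (hφ y).differentiableAt)
    (fun y => (hφ y).deriv) z 0
  have h1 := (hrange z).1
  have h2 : 0 < 1 - V z := by linarith [(hrange z).2]
  have hlog : Real.log (V z) - Real.log (1 - V z) = -(z / Real.sqrt 2) := by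
    rw [h0] at hconst
    norm_num at hconst
    linarith
  have hratio : V z / (1 - V z) = Real.exp (-(z / Real.sqrt 2)) := by
    have h := Real.exp_sub (Real.log (V z)) (Real.log (1 - V z))
    rw [Real.exp_log h1, Real.exp_log h2, hlog] at h
    exact h.symm
  have hEx : 0 < Real.exp (z / Real.sqrt 2) := Real.exp_pos _
  have hkey : V z * Real.exp (z / Real.sqrt 2) = 1 - V z := by
    rw [Real.exp_neg] at hratio
    field_simp at hratio
    linarith
  unfold U₀
  rw [eq_div_iff (by positivity)]
  linarith

theorem stmt_5 (V : ℝ → ℝ)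
    (hV : Differentiable ℝ V) (hV' : Differentiable ℝ (deriv V))
    (heq : ∀ z : ℝ, deriv (deriv V) z + f (V z) = 0)
    (h0 : V 0 = 1 / 2)
    (hbot : Filter.Tendsto V Filter.atBot (nhds 1))
    (htop : Filter.Tendsto V Filter.atTop (nhds 0)) :
    ∀ z : ℝ, V z = U₀ z := by
  have hV'' : ∀ z, deriv (deriv V) z = -f (V z) := fun z => by linarith [heq z]
  set E : ℝ → ℝ := fun z => (deriv V z)^2 / 2 + F (V z) with hEdef
  have hE : ∀ z, HasDerivAt E 0 z := by
    intro z
    have hd1 : HasDerivAt V (deriv V z) z := (hV z).hasDerivAt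
    have hd2 : HasDerivAt (deriv V) (deriv (deriv V) z) z := (hV' z).hasDerivAt
    have h1 : HasDerivAt (fun y => (deriv V y)^2 / 2) (deriv V z * deriv (deriv V) z) z := by
      have := (hd2.pow 2).div_const 2
      refine this.congr_deriv (Eq.symm ?_); ring
    have h2 : HasDerivAt (fun y => F (V y)) (f (V z) * deriv V z) z :=
      (hasDerivAt_F (V z)).comp z hd1
    have := h1.add h2
    refine this.congr_deriv (Eq.symm ?_)
    rw [hV'' z]; ring
  have hEconst : ∀ z, E z = E 0 :=
    fun z => is_const_of_deriv_eq_zero (fun y => (hE y).differentiableAt)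
      (fun y => (hE y).deriv) z 0
  set E0 : ℝ := E 0 with hE0def
  have energy : ∀ z, (deriv V z)^2 = 2 * E0 + (V z)^2 * (V z - 1)^2 / 2 := by
    intro z
    have := hEconst z
    simp only [hEdef, F] at this ⊢
    linarith
  -- E0 = 0
  have hE0 : E0 = 0 := by
    have hFcont : Continuous fun u : ℝ => (u:ℝ)^2 * (u-1)^2 / 2 :=
      ((continuous_pow 2).mul ((continuous_id.sub continuous_const).pow 2)).div_const 2
    have htend : Tendsto (fun z => (deriv V z)^2) atTop (nhds (2 * E0)) := by
      have h1 : Tendsto (fun z => 2 * E0 + (V z)^2 * (V z - 1)^2 / 2) atTop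
          (nhds (2 * E0 + (0:ℝ)^2 * ((0:ℝ)-1)^2 / 2)) :=
        tendsto_const_nhds.add ((hFcont.tendsto 0).comp htop)
      simp only [energy]
      simpa using h1
    have hge : 0 ≤ 2 * E0 := ge_of_tendsto' htend (fun x => sq_nonneg _)
    rcases eq_or_lt_of_le hge with h | hpos
    · linarith
    · exfalso
      have hE0pos : 0 < E0 := by linarith
      have hs : 0 < Real.sqrt E0 := Real.sqrt_pos.mpr hE0pos
      set s := Real.sqrt E0 with hsdef
      have hev : ∀ᶠ z in atTop, E0 < (deriv V z)^2 :=
        htend.eventually (eventually_gt_nhds (by linarith))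
      obtain ⟨M, hM⟩ := eventually_atTop.mp hev
      have habs : ∀ z, M ≤ z → s < |deriv V z| := by
        intro z hz
        calc s < Real.sqrt ((deriv V z)^2) := Real.sqrt_lt_sqrt hE0pos.le (hM z hz)
        _ = |deriv V z| := Real.sqrt_sq_eq_abs _
      have hkey : ∀ z, M ≤ z → (s < deriv V z ∨ deriv V z < -s) := by
        intro z hz
        rcases lt_abs.mp (habs z hz) with h | h
        · left; exact h
        · right; linarith
      have hnz : ∀ z, M ≤ z → deriv V z ≠ 0 := by
        intro z hz h
        rcases hkey z hz with h' | h' <;> rw [h] at h' <;> linarith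
      have hsign : (∀ z, M ≤ z → s < deriv V z) ∨ (∀ z, M ≤ z → deriv V z < -s) := by
        have ivt : ∀ z, M ≤ z → s < deriv V M → s < deriv V z ∨ ¬ deriv V z < -s := by
          intro z hz hM'
          by_contra hcon
          push_neg at hcon
          obtain ⟨h1, h2⟩ := hcon
          have h0mem : (0:ℝ) ∈ Set.uIcc (deriv V M) (deriv V z) := by
            rw [Set.mem_uIcc]; right; constructor <;> linarith
          obtain ⟨c, hc, hc0⟩ := intermediate_value_uIcc
            (hV'.continuous.continuousOn (s := Set.uIcc M z)) h0mem
          rw [Set.uIcc_of_le hz] at hc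
          exact hnz c hc.1 hc0
        have ivt' : ∀ z, M ≤ z → deriv V M < -s → deriv V z < -s ∨ ¬ s < deriv V z := by
          intro z hz hM'
          by_contra hcon
          push_neg at hcon
          obtain ⟨h1, h2⟩ := hcon
          have h0mem : (0:ℝ) ∈ Set.uIcc (deriv V M) (deriv V z) := by
            rw [Set.mem_uIcc]; left; constructor <;> linarith
          obtain ⟨c, hc, hc0⟩ := intermediate_value_uIcc
            (hV'.continuous.continuousOn (s := Set.uIcc M z)) h0mem
          rw [Set.uIcc_of_le hz] at hc
          exact hnz c hc.1 hc0
        rcases hkey M le_rfl with h | h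
        · left
          intro z hz
          rcases ivt z hz h with h' | h'
          · exact h'
          · rcases hkey z hz with h'' | h''
            · exact h''
            · exact absurd h'' h'
        · right
          intro z hz
          rcases ivt' z hz h with h' | h'
          · exact h'
          · rcases hkey z hz with h'' | h''
            · exact absurd h'' h'
            · exact h''
      have hbound : ∀ᶠ z in atTop, V z ∈ Set.Ioo (-1 : ℝ) 1 :=
        htop.eventually (Ioo_mem_nhds (by norm_num) (by norm_num))
      obtain ⟨z, hz1, hz2⟩ := ((eventually_ge_atTop (M + (3 + |V M|)/s)).and hbound).exists
      have hdpos : 0 < (3 + |V M|)/s := by positivity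
      have hMz : M < z := by linarith
      obtain ⟨c, hc, hceq⟩ := exists_hasDerivAt_eq_slope V (deriv V) hMz
        (hV.continuous.continuousOn) (fun x _ => (hV x).hasDerivAt)
      have hsz : 3 + |V M| ≤ s * (z - M) := by
        have h := (div_le_iff₀ hs).mp (by linarith : (3 + |V M|)/s ≤ z - M)
        linarith
      have hVM : -|V M| ≤ V M ∧ V M ≤ |V M| := ⟨neg_abs_le _, le_abs_self _⟩
      rcases hsign with hpos' | hneg'
      · have h1 : s < (V z - V M) / (z - M) := hceq ▸ hpos' c hc.1.le
        have h2 : s * (z - M) < V z - V M := (lt_div_iff₀ (by linarith)).mp h1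
        have := hz2.2
        linarith
      · have h1 : (V z - V M) / (z - M) < -s := hceq ▸ hneg' c hc.1.le
        have h2 : V z - V M < -s * (z - M) := (div_lt_iff₀ (by linarith)).mp h1
        have := hz2.1
        linarith
  have key : ∀ z, (deriv V z)^2 = (V z)^2 * (V z - 1)^2 / 2 := by
    intro z
    rw [energy z, hE0]
    ring
  exact final_part V hV hV' hV'' (by rw [h0]) htop key
end

section
/- (Lemma 5.7.) For all a, z ∈ ℝ, |U₀(z + a) − 𝟙_{(−∞,0]}(z)| ≤ exp(−|z + a|/√2) + 𝟙_{(−|a|,|a|]}(z), where 𝟙_S denotes the indicator function of the set S ⊆ ℝ. -/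
lemma U0_pos (w : ℝ) : 0 < U₀ w := by
  have := Real.exp_pos (w / Real.sqrt 2)
  unfold U₀; positivity

lemma U0_le_one (w : ℝ) : U₀ w ≤ 1 := by
  have h := (Real.exp_pos (w / Real.sqrt 2)).le
  unfold U₀
  rw [div_le_one (by linarith)]
  linarith

lemma U0_le_exp (w : ℝ) : U₀ w ≤ Real.exp (-w / Real.sqrt 2) := by
  have hE := Real.exp_pos (w / Real.sqrt 2)
  have : Real.exp (-w / Real.sqrt 2) = 1 / Real.exp (w / Real.sqrt 2) := by
    rw [neg_div, Real.exp_neg, one_div]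
  rw [this]
  unfold U₀
  apply one_div_le_one_div_of_le hE
  linarith

lemma one_sub_U0_le_exp (w : ℝ) : 1 - U₀ w ≤ Real.exp (w / Real.sqrt 2) := by
  have hE := Real.exp_pos (w / Real.sqrt 2)
  unfold U₀
  have key : (1:ℝ) ≤ Real.exp (w / Real.sqrt 2) + 1 / (1 + Real.exp (w / Real.sqrt 2)) := by
    have h1 : (0:ℝ) < 1 + Real.exp (w / Real.sqrt 2) := by linarith
    have h2 : 1 / (1 + Real.exp (w / Real.sqrt 2)) * (1 + Real.exp (w / Real.sqrt 2)) = 1 :=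
      one_div_mul_cancel h1.ne'
    nlinarith [sq_nonneg (Real.exp (w / Real.sqrt 2)), Real.exp_pos (w / Real.sqrt 2),
      mul_pos (div_pos one_pos h1) h1]
  linarith

theorem stmt_6 :
    ∀ a z : ℝ,
      |U₀ (z + a) - Set.indicator (Set.Iic (0 : ℝ)) (fun _ => (1 : ℝ)) z| ≤
        Real.exp (-|z + a| / Real.sqrt 2) +
          Set.indicator (Set.Ioc (-|a|) |a|) (fun _ => (1 : ℝ)) z := by
  intro a z
  have ha1 : a ≤ |a| := le_abs_self a
  have ha2 : -|a| ≤ a := neg_abs_le a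
  have hpos := U0_pos (z + a)
  have hle1 := U0_le_one (z + a)
  have hindnn : 0 ≤ Set.indicator (Set.Ioc (-|a|) |a|) (fun _ => (1 : ℝ)) z :=
    Set.indicator_nonneg (fun _ _ => zero_le_one) z
  rcases le_or_gt z 0 with hz | hz
  · rw [Set.indicator_of_mem (Set.mem_Iic.mpr hz)]
    rcases le_or_gt z (-|a|) with hza | hza
    · have hw : z + a ≤ 0 := by linarith
      have habs : |z + a| = -(z + a) := abs_of_nonpos hw
      have := one_sub_U0_le_exp (z + a)
      rw [abs_of_nonpos (by linarith : U₀ (z + a) - 1 ≤ 0), habs]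
      have : Real.exp (-(-(z + a)) / Real.sqrt 2) = Real.exp ((z + a) / Real.sqrt 2) := by
        ring_nf
      linarith [one_sub_U0_le_exp (z + a)]
    · rw [Set.indicator_of_mem (Set.mem_Ioc.mpr ⟨hza, by linarith [abs_nonneg a]⟩)]
      have := Real.exp_pos (-|z + a| / Real.sqrt 2)
      rw [abs_of_nonpos (by linarith : U₀ (z + a) - 1 ≤ 0)]
      linarith
  · rw [Set.indicator_of_notMem (by simp [Set.mem_Iic]; linarith), sub_zero,
      abs_of_pos hpos]
    rcases le_or_gt z |a| with hza | hza
    · rw [Set.indicator_of_mem (Set.mem_Ioc.mpr ⟨by linarith [abs_nonneg a], hza⟩)]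
      have := Real.exp_pos (-|z + a| / Real.sqrt 2)
      linarith
    · have hw : 0 ≤ z + a := by linarith
      have habs : |z + a| = z + a := abs_of_nonneg hw
      rw [habs]
      linarith [U0_le_exp (z + a)]
end

section
/- There exist constants β > 0 and σ₀ > 0 such that for every σ ∈ (0, σ₀] and every z ∈ ℝ, −U₀'(z) − σ·f'(U₀(z)) ≥ 4σβ. -/
/-- The derivative `f'(u) = -3u² + 3u - 1/2` of the bistable nonlinearity
`f(u) = u(1-u)(u-1/2)`. -/
noncomputable def f' (u : ℝ) : ℝ := -3 * u ^ 2 + 3 * u - 1 / 2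

lemma deriv_U₀ (z : ℝ) :
    deriv U₀ z = -(Real.exp (z / Real.sqrt 2) / Real.sqrt 2) /
      (1 + Real.exp (z / Real.sqrt 2)) ^ 2 := by
  have hE : (0:ℝ) < Real.exp (z / Real.sqrt 2) := Real.exp_pos _
  have hne : (1 + Real.exp (z / Real.sqrt 2)) ≠ 0 := by positivity
  have h1 : HasDerivAt (fun z : ℝ => z / Real.sqrt 2) (1 / Real.sqrt 2) z := by
    simpa using (hasDerivAt_id z).div_const (Real.sqrt 2)
  have h2 : HasDerivAt (fun z : ℝ => Real.exp (z / Real.sqrt 2))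
      (Real.exp (z / Real.sqrt 2) * (1 / Real.sqrt 2)) z := h1.exp
  have h3 : HasDerivAt (fun z : ℝ => 1 + Real.exp (z / Real.sqrt 2))
      (Real.exp (z / Real.sqrt 2) * (1 / Real.sqrt 2)) z := h2.const_add 1
  have h4 := h3.inv hne
  have h5 : HasDerivAt U₀
      (-(Real.exp (z / Real.sqrt 2) * (1 / Real.sqrt 2)) /
        (1 + Real.exp (z / Real.sqrt 2)) ^ 2) z := by
    have : U₀ = fun z : ℝ => (1 + Real.exp (z / Real.sqrt 2))⁻¹ := by
      funext x; simp [U₀, one_div]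
    rw [this]
    simpa [div_eq_mul_inv, neg_div, Pi.inv_def] using h4
  rw [h5.deriv]
  ring

theorem stmt_9 :
    ∃ β : ℝ, 0 < β ∧ ∃ σ₀ : ℝ, 0 < σ₀ ∧
      ∀ σ : ℝ, σ ∈ Set.Ioc (0 : ℝ) σ₀ →
        ∀ z : ℝ, -deriv U₀ z - σ * f' (U₀ z) ≥ 4 * σ * β := by
  refine ⟨1/8, by norm_num, 1/5, by norm_num, ?_⟩
  rintro σ ⟨hσ0, hσ1⟩ z
  rw [deriv_U₀]
  set E := Real.exp (z / Real.sqrt 2) with hE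
  have hEpos : (0:ℝ) < E := Real.exp_pos _
  have hs : Real.sqrt 2 ^ 2 = 2 := Real.sq_sqrt (by norm_num)
  have hs1 : (1:ℝ) < Real.sqrt 2 := by
    nlinarith [Real.sqrt_nonneg 2]
  have hne : (1 + E) ≠ 0 := by positivity
  have hU : U₀ z = 1 / (1 + E) := rfl
  rw [hU]
  have key : E / Real.sqrt 2 / (1 + E) ^ 2
      - σ * f' (1 / (1 + E)) ≥ 4 * σ * (1/8) := by
    rw [f', ge_iff_le, div_div]
    rw [div_sub' (by positivity), le_div_iff₀ (by positivity)]
    have h1 : (1:ℝ) / (1 + E) = (1 + E)⁻¹ := one_div _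
    field_simp
    have h2 : Real.sqrt 2 * σ ≤ 1/3 := by nlinarith
    have h3 : 0 ≤ (1 - 3 * (Real.sqrt 2 * σ)) * E * (1 + E) ^ 3 := by
      have : (0:ℝ) ≤ 1 - 3 * (Real.sqrt 2 * σ) := by linarith
      positivity
    nlinarith [h3, pow_pos (show (0:ℝ) < 1 + E by positivity) 3]
  calc 4 * σ * (1/8) ≤ E / Real.sqrt 2 / (1 + E) ^ 2 - σ * f' (1 / (1 + E)) := key
    _ = -(-(E / Real.sqrt 2) / (1 + E) ^ 2) - σ * f' (1 / (1 + E)) := by ring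
end

section
/- Bound on the time integral of the Laplacian of m (abstract form of the estimate in Lemma 2.1(b)): let α > 0, C₀ > 0, t > 0, and let m : ℝ → ℝ be differentiable and g, u : ℝ → ℝ be continuous with m'(s) = α·g(s) + u(s) − m(s) for all s ∈ [0, t]. If 0 ≤ m(s) ≤ C₀ and 0 ≤ u(s) ≤ C₀ for all s ∈ [0, t], then |∫₀ᵗ g(s) ds| ≤ (C₀ + C₀·t)/α. -/
theorem stmt_12 (α C₀ t : ℝ) (hα : 0 < α) (hC₀ : 0 < C₀) (ht : 0 < t)
    (m g u : ℝ → ℝ)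
    (hg : Continuous g) (hu : Continuous u)
    (hm : ∀ s ∈ Set.Icc (0 : ℝ) t, HasDerivAt m (α * g s + u s - m s) s)
    (hmb : ∀ s ∈ Set.Icc (0 : ℝ) t, 0 ≤ m s ∧ m s ≤ C₀)
    (hub : ∀ s ∈ Set.Icc (0 : ℝ) t, 0 ≤ u s ∧ u s ≤ C₀) :
    |∫ s in (0 : ℝ)..t, g s| ≤ (C₀ + C₀ * t) / α := by
  have huIcc : Set.uIcc (0 : ℝ) t = Set.Icc 0 t := Set.uIcc_of_le ht.le
  have hmc : ContinuousOn m (Set.Icc 0 t) := fun s hs =>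
    ((hm s hs).continuousAt).continuousWithinAt
  have hint : IntervalIntegrable (fun s => α * g s + u s - m s) MeasureTheory.volume 0 t := by
    apply ContinuousOn.intervalIntegrable
    rw [huIcc]
    exact (((hg.continuousOn.const_smul α).add hu.continuousOn).sub hmc)
  have hftc : ∫ s in (0:ℝ)..t, (α * g s + u s - m s) = m t - m 0 := by
    apply intervalIntegral.integral_eq_sub_of_hasDerivAt
    · intro s hs; exact hm s (huIcc ▸ hs)
    · exact hint
  have hintu : IntervalIntegrable (fun s => u s - m s) MeasureTheory.volume 0 t := by
    apply ContinuousOn.intervalIntegrable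
    rw [huIcc]
    exact hu.continuousOn.sub hmc
  have hintg : IntervalIntegrable g MeasureTheory.volume 0 t := hg.intervalIntegrable 0 t
  have hintag : IntervalIntegrable (fun s => α * g s) MeasureTheory.volume 0 t :=
    hintg.const_mul α
  have hsplit : ∫ s in (0:ℝ)..t, (α * g s + u s - m s)
      = α * (∫ s in (0:ℝ)..t, g s) + ∫ s in (0:ℝ)..t, (u s - m s) := by
    rw [← intervalIntegral.integral_const_mul]
    rw [← intervalIntegral.integral_add hintag hintu]
    congr 1; ext s; ring
  have key : α * (∫ s in (0:ℝ)..t, g s) = m t - m 0 - ∫ s in (0:ℝ)..t, (u s - m s) := by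
    rw [← hftc, hsplit]; ring
  have hb1 : |m t - m 0| ≤ C₀ := by
    have h1 := hmb t ⟨ht.le, le_refl t⟩
    have h2 := hmb 0 ⟨le_refl 0, ht.le⟩
    rw [abs_sub_le_iff]; constructor <;> linarith [h1.1, h1.2, h2.1, h2.2]
  have hb2 : |∫ s in (0:ℝ)..t, (u s - m s)| ≤ C₀ * t := by
    have := intervalIntegral.norm_integral_le_of_norm_le_const
      (C := C₀) (f := fun s => u s - m s) (a := (0:ℝ)) (b := t) ?_
    · simpa [abs_of_pos ht] using this
    · intro s hs
      rw [Set.uIoc_of_le ht.le] at hs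
      have hs' : s ∈ Set.Icc (0:ℝ) t := ⟨hs.1.le, hs.2⟩
      have h1 := hub s hs'
      have h2 := hmb s hs'
      rw [Real.norm_eq_abs, abs_sub_le_iff]
      constructor <;> linarith [h1.1, h1.2, h2.1, h2.2]
  have habs : |α * (∫ s in (0:ℝ)..t, g s)| ≤ C₀ + C₀ * t := by
    rw [key]
    calc |m t - m 0 - ∫ s in (0:ℝ)..t, (u s - m s)|
        ≤ |m t - m 0| + |∫ s in (0:ℝ)..t, (u s - m s)| := abs_sub _ _
      _ ≤ C₀ + C₀ * t := add_le_add hb1 hb2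
  rw [abs_mul, abs_of_pos hα] at habs
  rw [le_div_iff₀ hα]
  linarith
end
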